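/- Let G be a topological group, g ∈ G, and let H be the closure of the cyclic subgroup generated by g. Let H⁰ be the connected component of the identity in H, and suppose H/H⁰ is a finite group of order ℓ in which the image of g has order ℓ. Then the closure of the cyclic subgroup generated by g^ℓ equals H⁰. -/

import Mathlib

open Subgroup

/-- If `H` is the closure of the cyclic subgroup generated by `g`, `H⁰` the identity
component of `H`, and the component group `H/H⁰` has order `ℓ` with the image of `g`
of order `ℓ`, then the closure of the subgroup generated by `g^ℓ` equals `H⁰`. -/
theorem closure_zpowers_pow_eq_identityComponent
    {G : Type*} [Group G] [TopologicalSpace G] [IsTopologicalGroup G] (g : G) (ℓ : ℕ)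
    (H : Subgroup G) (hH : H = (Subgroup.zpowers g).topologicalClosure)
    (g' : H) (hg' : (g' : G) = g)
    [hn : (Subgroup.connectedComponentOfOne H).Normal]
    (hfin : Finite (H ⧸ Subgroup.connectedComponentOfOne H))
    (hcard : Nat.card (H ⧸ Subgroup.connectedComponentOfOne H) = ℓ)
    (hord : orderOf (QuotientGroup.mk g' : H ⧸ Subgroup.connectedComponentOfOne H) = ℓ) :
    (Subgroup.zpowers (g' ^ ℓ)).topologicalClosure
      = Subgroup.connectedComponentOfOne H := by
  set N := Subgroup.connectedComponentOfOne H with hN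
  have hNclosed : IsClosed (N : Set H) := isClosed_connectedComponent
  have : N.FiniteIndex := Subgroup.finiteIndex_of_finite_quotient (H := N)
  have hNopen : IsOpen (N : Set H) :=
    Subgroup.isOpen_of_isClosed_of_finiteIndex N hNclosed
  -- g'^ℓ ∈ N
  have hmem : g' ^ ℓ ∈ N := by
    rw [← QuotientGroup.eq_one_iff]
    rw [QuotientGroup.mk_pow, ← hord]
    exact pow_orderOf_eq_one _
  -- density of zpowers g' in H
  have hdense : Dense ((Subgroup.zpowers g' : Subgroup H) : Set H) := by
    intro x
    rw [closure_subtype]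
    have himg : Subtype.val '' ((Subgroup.zpowers g' : Subgroup H) : Set H)
        = ((Subgroup.zpowers g : Subgroup G) : Set G) := by
      have : (Subgroup.zpowers g' : Subgroup H).map H.subtype = Subgroup.zpowers g := by
        rw [MonoidHom.map_zpowers]
        simp [hg']
      rw [← this]
      rfl
    rw [himg]
    show (x : G) ∈ (Subgroup.zpowers g).topologicalClosure
    rw [← hH]
    exact x.2
  apply le_antisymm
  · exact Subgroup.topologicalClosure_minimal _
      ((Subgroup.zpowers_le).mpr hmem) hNclosed
  · intro x hx
    have h1 : (N : Set H) ⊆ _root_.closure ((N : Set H) ∩ ((Subgroup.zpowers g' : Subgroup H) : Set H)) :=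
      hdense.open_subset_closure_inter hNopen
    have h2 : (N : Set H) ∩ ((Subgroup.zpowers g' : Subgroup H) : Set H)
        ⊆ ((Subgroup.zpowers (g' ^ ℓ) : Subgroup H) : Set H) := by
      rintro y ⟨hyN, k, hk⟩
      simp only at hk
      have hyq : (QuotientGroup.mk g' : H ⧸ N) ^ k = 1 := by
        rw [← QuotientGroup.mk_zpow, hk, QuotientGroup.eq_one_iff]
        exact hyN
      have hdvd : ((ℓ : ℕ) : ℤ) ∣ k := by
        rw [← hord]
        exact orderOf_dvd_iff_zpow_eq_one.mpr hyq
      obtain ⟨m, hm⟩ := hdvd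
      refine ⟨m, ?_⟩
      show (g' ^ ℓ) ^ m = y
      rw [← hk, hm, zpow_mul, zpow_natCast]
    show x ∈ _root_.closure ((Subgroup.zpowers (g' ^ ℓ) : Subgroup H) : Set H)
    exact _root_.closure_mono h2 (h1 hx)
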